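/- Let a > 0 and, for λ ∈ (−1,1), define the complex numbers D_±(λ;a) = 1 + (1 − a²)·(2λ² − 1 ∓ 2iλ√(1 − λ²)). Then: (i) D_±(λ;a) ≠ 0 and |D_±(λ;a)| = √(a⁴ + 4(1 − a²)λ²); (ii) the scattering matrix S_a(λ) := D_−(λ;a)/D_+(λ;a) satisfies |S_a(λ)| = 1, S_a(0) = 1, and S_a(−λ) is the complex conjugate of S_a(λ); (iii) if a ≠ √2, then S_a(λ) → 1 as λ → 1⁻ and as λ → −1⁺. -/

import Mathlib

/-- Boundary value `D_a(λ + i0) = 1 + (1 − a²)(2λ² − 1 − 2iλ√(1 − λ²))` of the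
perturbation determinant. -/
noncomputable def Dplus (a x : ℝ) : ℂ :=
  1 + ((1 - a ^ 2 : ℝ) : ℂ) *
    (((2 * x ^ 2 - 1 : ℝ) : ℂ) - 2 * Complex.I * (x : ℂ) * ((Real.sqrt (1 - x ^ 2) : ℝ) : ℂ))

/-- Boundary value `D_a(λ − i0) = 1 + (1 − a²)(2λ² − 1 + 2iλ√(1 − λ²))` of the
perturbation determinant. -/
noncomputable def Dminus (a x : ℝ) : ℂ :=
  1 + ((1 - a ^ 2 : ℝ) : ℂ) *
    (((2 * x ^ 2 - 1 : ℝ) : ℂ) + 2 * Complex.I * (x : ℂ) * ((Real.sqrt (1 - x ^ 2) : ℝ) : ℂ))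

/-- The scattering matrix `S_a(λ) = D_a(λ − i0)/D_a(λ + i0)`. -/
noncomputable def Smatrix (a x : ℝ) : ℂ := Dminus a x / Dplus a x


lemma Dplus_form (a x : ℝ) : Dplus a x =
    ((1 + (1 - a ^ 2) * (2 * x ^ 2 - 1) : ℝ) : ℂ)
      + ((-( (1 - a ^ 2) * (2 * x * Real.sqrt (1 - x ^ 2))) : ℝ) : ℂ) * Complex.I := by
  unfold Dplus; push_cast; ring

lemma normSq_Dplus (a x : ℝ) (hx : x ∈ Set.Ioo (-1:ℝ) 1) :
    Complex.normSq (Dplus a x) = a ^ 4 + 4 * (1 - a ^ 2) * x ^ 2 := by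
  have hs : Real.sqrt (1 - x ^ 2) ^ 2 = 1 - x ^ 2 := by
    apply Real.sq_sqrt; nlinarith [hx.1, hx.2]
  rw [Dplus_form, Complex.normSq_add_mul_I]
  linear_combination (4*(1-a^2)^2*x^2) * hs

lemma pos_aux (a x : ℝ) (ha : 0 < a) (hx : x ∈ Set.Ioo (-1:ℝ) 1) :
    0 < a ^ 4 + 4 * (1 - a ^ 2) * x ^ 2 := by
  obtain ⟨h1, h2⟩ := hx
  have hu : 0 < 1 - x ^ 2 := by nlinarith
  rcases le_or_gt (a ^ 2) 1 with h | h
  · nlinarith [pow_pos ha 4, sq_nonneg x]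
  · nlinarith [sq_nonneg (a ^ 2 - 2), mul_pos (by linarith : (0:ℝ) < a ^ 2 - 1) hu]

lemma conj_Dplus (a x : ℝ) : (starRingEnd ℂ) (Dplus a x) = Dminus a x := by
  unfold Dplus Dminus
  simp only [map_add, map_one, map_mul, map_sub, map_ofNat, Complex.conj_ofReal,
    Complex.conj_I]
  ring
lemma Dplus_neg (a x : ℝ) : Dplus a (-x) = Dminus a x := by
  unfold Dplus Dminus
  have h : (-x) ^ 2 = x ^ 2 := by ring
  rw [h]; push_cast; ring

lemma Dminus_neg (a x : ℝ) : Dminus a (-x) = Dplus a x := by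
  have := Dplus_neg a (-x)
  rw [neg_neg] at this
  exact this.symm

lemma Dplus_zero (a : ℝ) : Dplus a 0 = ((a ^ 2 : ℝ) : ℂ) := by
  unfold Dplus; push_cast; ring

lemma Dminus_zero (a : ℝ) : Dminus a 0 = ((a ^ 2 : ℝ) : ℂ) := by
  rw [← Dplus_neg, neg_zero, Dplus_zero]

lemma Dplus_one (a : ℝ) : Dplus a 1 = ((2 - a ^ 2 : ℝ) : ℂ) := by
  unfold Dplus
  push_cast
  norm_num
  ring

lemma Dminus_one (a : ℝ) : Dminus a 1 = ((2 - a ^ 2 : ℝ) : ℂ) := by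
  rw [← conj_Dplus, Dplus_one, Complex.conj_ofReal]

lemma continuous_Dplus (a : ℝ) : Continuous fun x => Dplus a x := by
  unfold Dplus
  continuity

lemma continuous_Dminus (a : ℝ) : Continuous fun x => Dminus a x := by
  unfold Dminus
  continuity

lemma sq_ne_two (a : ℝ) (ha : 0 < a) (h : a ≠ Real.sqrt 2) : (2 : ℝ) - a ^ 2 ≠ 0 := by
  intro hc
  apply h
  have h2 : a ^ 2 = 2 := by linarith
  rw [← h2, Real.sqrt_sq ha.le]

/-- Properties of the scattering matrix for the pair `H₁`, `H_a`: the boundary values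
`D_±(λ;a)` do not vanish and have modulus `√(a⁴ + 4(1 − a²)λ²)`; `S_a` is unimodular,
`S_a(0) = 1`, `S_a(−λ) = conj(S_a(λ))`; and if `a ≠ √2` then `S_a(λ) → 1` as
`λ → 1⁻` and as `λ → −1⁺`. -/
theorem stmt9 (a : ℝ) (ha : 0 < a) :
    (∀ x ∈ Set.Ioo (-1 : ℝ) 1,
      Dplus a x ≠ 0 ∧ Dminus a x ≠ 0 ∧
      ‖Dplus a x‖ = Real.sqrt (a ^ 4 + 4 * (1 - a ^ 2) * x ^ 2) ∧
      ‖Dminus a x‖ = Real.sqrt (a ^ 4 + 4 * (1 - a ^ 2) * x ^ 2)) ∧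
    (∀ x ∈ Set.Ioo (-1 : ℝ) 1, ‖Smatrix a x‖ = 1) ∧
    Smatrix a 0 = 1 ∧
    (∀ x ∈ Set.Ioo (-1 : ℝ) 1, Smatrix a (-x) = starRingEnd ℂ (Smatrix a x)) ∧
    (a ≠ Real.sqrt 2 →
      Filter.Tendsto (Smatrix a) (nhdsWithin 1 (Set.Iio 1)) (nhds 1) ∧
      Filter.Tendsto (Smatrix a) (nhdsWithin (-1) (Set.Ioi (-1))) (nhds 1)) := by
  have hne : ∀ x ∈ Set.Ioo (-1 : ℝ) 1, Dplus a x ≠ 0 := by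
    intro x hx h
    have h1 := normSq_Dplus a x hx
    rw [h, map_zero] at h1
    have := pos_aux a x ha hx
    linarith
  have habs : ∀ x ∈ Set.Ioo (-1 : ℝ) 1,
      ‖Dplus a x‖ = Real.sqrt (a ^ 4 + 4 * (1 - a ^ 2) * x ^ 2) := by
    intro x hx
    rw [Complex.norm_def, normSq_Dplus a x hx]
  have habs' : ∀ x ∈ Set.Ioo (-1 : ℝ) 1,
      ‖Dminus a x‖ = Real.sqrt (a ^ 4 + 4 * (1 - a ^ 2) * x ^ 2) := by
    intro x hx
    rw [← conj_Dplus, Complex.norm_conj]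
    exact habs x hx
  have hne' : ∀ x ∈ Set.Ioo (-1 : ℝ) 1, Dminus a x ≠ 0 := by
    intro x hx h
    apply hne x hx
    have : (starRingEnd ℂ) (Dplus a x) = 0 := by rw [conj_Dplus]; exact h
    simpa using this
  refine ⟨fun x hx => ⟨hne x hx, hne' x hx, habs x hx, habs' x hx⟩, ?_, ?_, ?_, ?_⟩
  · intro x hx
    rw [Smatrix, norm_div, habs x hx, habs' x hx]
    exact div_self (Real.sqrt_pos.mpr (pos_aux a x ha hx)).ne'
  · rw [Smatrix, Dplus_zero, Dminus_zero]
    exact div_self (by exact_mod_cast pow_ne_zero 2 ha.ne')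
  · intro x hx
    simp only [Smatrix, Dplus_neg, Dminus_neg, map_div₀, ← conj_Dplus, Complex.conj_conj]
  · intro h2
    have key : ((2 - a ^ 2 : ℝ) : ℂ) ≠ 0 := by exact_mod_cast sq_ne_two a ha h2
    have hcont : ∀ y : ℝ, Dplus a y ≠ 0 → ContinuousAt (Smatrix a) y := by
      intro y hy
      exact ((continuous_Dminus a).continuousAt).div ((continuous_Dplus a).continuousAt) hy
    constructor
    · have hy : Dplus a 1 ≠ 0 := by rw [Dplus_one]; exact key
      have hval : Smatrix a 1 = 1 := by
        rw [Smatrix, Dminus_one, Dplus_one]; exact div_self key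
      have := (hcont 1 hy).tendsto
      rw [hval] at this
      exact this.mono_left nhdsWithin_le_nhds
    · have hpm : Dplus a (-1) = ((2 - a ^ 2 : ℝ) : ℂ) := by
        rw [Dplus_neg, Dminus_one]
      have hmm : Dminus a (-1) = ((2 - a ^ 2 : ℝ) : ℂ) := by
        rw [Dminus_neg, Dplus_one]
      have hy : Dplus a (-1) ≠ 0 := by rw [hpm]; exact key
      have hval : Smatrix a (-1) = 1 := by
        rw [Smatrix, hpm, hmm]; exact div_self key
      have := (hcont (-1) hy).tendsto
      rw [hval] at this
      exact this.mono_left nhdsWithin_le_nhds
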